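/- (Soundness of SLD(D) resolution.) Let D be a qualification domain and P a QLP(D) program. Assume G₀ ⊢* G is a finite SLD(D) resolution computation from a goal G₀ ending in a solved goal G ≡ σ | Δ, and let (σ, μ) be the solution associated to G, where μ = ω_Δ is the valuation determined by the defining constraints of Δ. Then the computed answer (σ, μ) is a solution of G₀. -/

import Mathlib

/-- A qualification domain: a lattice with least element `⊥`, greatest element `⊤`,
and an attenuation operation `att` that is associative, commutative, monotone,
satisfies `att d ⊤ = d`, `att d ⊥ = ⊥`, `att d e < e` for `d, e ∉ {⊥, ⊤}`, and
distributes over binary meets. -/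
class QualDomain (D : Type*) extends Lattice D, BoundedOrder D where
  att : D → D → D
  att_assoc : ∀ a b c : D, att (att a b) c = att a (att b c)
  att_comm : ∀ a b : D, att a b = att b a
  att_mono : ∀ a b c d : D, a ≤ b → c ≤ d → att a c ≤ att b d
  att_top : ∀ a : D, att a ⊤ = a
  att_bot : ∀ a : D, att a ⊥ = ⊥
  att_lt : ∀ a b : D, a ≠ ⊥ → a ≠ ⊤ → b ≠ ⊥ → b ≠ ⊤ → att a b < b
  att_inf : ∀ a b c : D, att a (b ⊓ c) = att a b ⊓ att a c

/-- A signature: constructor (function) symbols and predicate symbols with arities. -/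
structure Signature where
  Func : Type
  Pred : Type
  fArity : Func → ℕ
  pArity : Pred → ℕ

/-- Terms over a signature, with variables drawn from `ℕ`. -/
inductive Term (Sg : Signature) : Type
  | var : ℕ → Term Sg
  | app : (f : Sg.Func) → (Fin (Sg.fArity f) → Term Sg) → Term Sg

/-- Atoms `p(t₁, …, tₙ)` over a signature. -/
structure Atom (Sg : Signature) : Type where
  pred : Sg.Pred
  args : Fin (Sg.pArity pred) → Term Sg

/-- Substitutions of terms for variables. -/
abbrev Subst (Sg : Signature) := ℕ → Term Sg

/-- Applying a substitution to a term. -/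
def Term.applySubst {Sg : Signature} : Term Sg → Subst Sg → Term Sg
  | .var v, θ => θ v
  | .app f a, θ => .app f (fun i => (a i).applySubst θ)

/-- Applying a substitution to an atom. -/
def Atom.applySubst {Sg : Signature} (A : Atom Sg) (θ : Subst Sg) : Atom Sg :=
  ⟨A.pred, fun i => (A.args i).applySubst θ⟩

/-- A `D`-annotated atom `A#d` is a pair of an atom and a qualification value. -/
abbrev AnnAtom (Sg : Signature) (D : Type*) := Atom Sg × D

/-- The `D`-entailment relation: `A#d ⊨ A'#d'` iff `A' = Aθ` for some
substitution `θ` and `d' ⊑ d`. -/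
def Entails {Sg : Signature} {D : Type*} [QualDomain D]
    (x y : AnnAtom Sg D) : Prop :=
  ∃ θ : Subst Sg, y.1 = x.1.applySubst θ ∧ y.2 ≤ x.2

/-- The annotated Herbrand base `At_Σ(D)`: all annotated atoms `A#d` with `d ≠ ⊥`. -/
def HerbrandBase (Sg : Signature) (D : Type*) [QualDomain D] :
    Set (AnnAtom Sg D) := {x | x.2 ≠ ⊥}

/-- An open Herbrand interpretation over `D`: a subset of the annotated Herbrand
base closed under `D`-entailment. -/
def IsInterp {Sg : Signature} {D : Type*} [QualDomain D]
    (I : Set (AnnAtom Sg D)) : Prop :=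
  I ⊆ HerbrandBase Sg D ∧
  ∀ x ∈ I, ∀ y ∈ HerbrandBase Sg D, Entails x y → y ∈ I

/-- A qualified definite Horn clause `A ←d B₁,…,Bₖ`. -/
structure Clause (Sg : Signature) (D : Type*) where
  head : Atom Sg
  d : D
  body : List (Atom Sg)

/-- The immediate-consequences operator `T_P`. -/
def TP {Sg : Signature} {D : Type*} [QualDomain D]
    (P : Set (Clause Sg D)) (I : Set (AnnAtom Sg D)) : Set (AnnAtom Sg D) :=
  { x | ∃ C ∈ P, ∃ θ : Subst Sg, ∃ ds : Fin C.body.length → D,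
      (∀ i, ds i ≠ ⊥) ∧
      (∀ i, ((C.body.get i).applySubst θ, ds i) ∈ I) ∧
      x.1 = C.head.applySubst θ ∧ x.2 ≠ ⊥ ∧
      x.2 ≤ QualDomain.att C.d (Finset.univ.inf ds) }

/-- `I` is a model of a clause `A ←d B₁,…,Bₖ`. -/
def ModelsClause {Sg : Signature} {D : Type*} [QualDomain D]
    (I : Set (AnnAtom Sg D)) (C : Clause Sg D) : Prop :=
  ∀ (θ : Subst Sg) (ds : Fin C.body.length → D),
    (∀ i, ds i ≠ ⊥) →
    (∀ i, ((C.body.get i).applySubst θ, ds i) ∈ I) →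
    (C.head.applySubst θ, QualDomain.att C.d (Finset.univ.inf ds)) ∈ I

/-- `I` is a model of the program `P`. -/
def Models {Sg : Signature} {D : Type*} [QualDomain D]
    (I : Set (AnnAtom Sg D)) (P : Set (Clause Sg D)) : Prop :=
  ∀ C ∈ P, ModelsClause I C

/-- Iterates `T_P↑ⁿ(∅)` of the operator `T_P` starting from the empty set. -/
def TPiter {Sg : Signature} {D : Type*} [QualDomain D]
    (P : Set (Clause Sg D)) : ℕ → Set (AnnAtom Sg D)
  | 0 => ∅
  | n + 1 => TP P (TPiter P n)

/-- Derivability in the calculus `QHL(D)` via the single rule `QMP(D)`. -/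
inductive Derives {Sg : Signature} {D : Type*} [QualDomain D]
    (P : Set (Clause Sg D)) : AnnAtom Sg D → Prop
  | qmp (C : Clause Sg D) (hC : C ∈ P) (θ : Subst Sg)
      (ds : Fin C.body.length → D)
      (hds : ∀ i, ds i ≠ ⊥)
      (hbody : ∀ i, Derives P ((C.body.get i).applySubst θ, ds i))
      (d' : D) (hd' : d' ≠ ⊥)
      (hle : d' ≤ QualDomain.att C.d (Finset.univ.inf ds)) :
      Derives P (C.head.applySubst θ, d')

/-- Derivability in `QHL(D)` using exactly `n` inference steps. -/
inductive DerivesN {Sg : Signature} {D : Type*} [QualDomain D]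
    (P : Set (Clause Sg D)) : ℕ → AnnAtom Sg D → Prop
  | qmp (C : Clause Sg D) (hC : C ∈ P) (θ : Subst Sg)
      (ds : Fin C.body.length → D) (ns : Fin C.body.length → ℕ)
      (hds : ∀ i, ds i ≠ ⊥)
      (hbody : ∀ i, DerivesN P (ns i) ((C.body.get i).applySubst θ, ds i))
      (d' : D) (hd' : d' ≠ ⊥)
      (hle : d' ≤ QualDomain.att C.d (Finset.univ.inf ds)) :
      DerivesN P (Finset.univ.sum ns + 1) (C.head.applySubst θ, d')

/-! ### Goals and SLD(D) resolution -/

/-- The set of (term) variables of a term. -/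
def Term.vars {Sg : Signature} : Term Sg → Set ℕ
  | .var v => {v}
  | .app _ a => ⋃ i, (a i).vars

/-- The set of (term) variables of an atom. -/
def Atom.vars {Sg : Signature} (A : Atom Sg) : Set ℕ := ⋃ i, (A.args i).vars

/-- The set of (term) variables of a clause. -/
def Clause.vars {Sg : Signature} {D : Type*} (C : Clause Sg D) : Set ℕ :=
  C.head.vars ∪ {v | ∃ B ∈ C.body, v ∈ Atom.vars B}

/-- Composition of substitutions: `(σ.comp τ) v = (σ v) τ`. -/
def Subst.comp {Sg : Signature} (σ τ : Subst Sg) : Subst Sg :=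
  fun v => (σ v).applySubst τ

/-- A substitution is idempotent iff `σσ = σ`. -/
def Subst.Idem {Sg : Signature} (σ : Subst Sg) : Prop := σ.comp σ = σ

/-- The domain of a substitution: the variables it moves. -/
def Subst.dom {Sg : Signature} (σ : Subst Sg) : Set ℕ :=
  {v | σ v ≠ Term.var v}

/-- Qualification constraints over `D`, with qualification variables drawn
from `ℕ`: threshold constraints `α ∘ W ⊒ β` and defining constraints
`W = d ∘ ⊓{W₁,…,Wₖ}`. -/
inductive QConstraint (D : Type*) : Type _
  | threshold (α : D) (W : ℕ) (β : D)
  | defining (W : ℕ) (d : D) (Ws : List ℕ)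

/-- Greatest lower bound of a list of qualification values (`⊤` for `[]`). -/
def listInf {D : Type*} [QualDomain D] (l : List D) : D :=
  l.foldr (· ⊓ ·) ⊤

/-- Satisfaction of a qualification constraint by a valuation `ρ`. -/
def QConstraint.sat {D : Type*} [QualDomain D] (ρ : ℕ → D) :
    QConstraint D → Prop
  | .threshold α W β => β ≤ QualDomain.att α (ρ W)
  | .defining W d Ws => ρ W = QualDomain.att d (listInf (Ws.map ρ))

/-- Well-formedness of a qualification constraint: in `α ∘ W ⊒ β` both `α` and
`β` belong to `D \ {⊥}` and `α ⊒ β`; in `W = d ∘ ⊓{W₁,…,Wₖ}`, `d ∈ D \ {⊥}`. -/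
def QConstraint.WF {D : Type*} [QualDomain D] : QConstraint D → Prop
  | .threshold α _ β => α ≠ ⊥ ∧ β ≠ ⊥ ∧ β ≤ α
  | .defining _ d _ => d ≠ ⊥

/-- The variable constrained by a qualification constraint. -/
def QConstraint.cvar {D : Type*} : QConstraint D → ℕ
  | .threshold _ W _ => W
  | .defining W _ _ => W

/-- All qualification variables occurring in a constraint. -/
def QConstraint.wvarSet {D : Type*} : QConstraint D → Set ℕ
  | .threshold _ W _ => {W}
  | .defining W _ Ws => insert W {v | v ∈ Ws}

/-- Whether a constraint is a threshold constraint. -/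
def QConstraint.isThreshold {D : Type*} : QConstraint D → Prop
  | .threshold _ _ _ => True
  | .defining _ _ _ => False

/-- `war(Δ)`: qualification variables occurring in a constraint set. -/
def war {D : Type*} (Δ : Set (QConstraint D)) : Set ℕ :=
  {v | ∃ c ∈ Δ, v ∈ c.wvarSet}

/-- `dom(Δ)`: qualification variables constrained by some constraint of `Δ`. -/
def domC {D : Type*} (Δ : Set (QConstraint D)) : Set ℕ :=
  {v | ∃ c ∈ Δ, c.cvar = v}

/-- `W >_Δ W'` iff `Δ` contains a defining constraint for `W` mentioning `W'`
on its right-hand side. -/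
def dependsOn {D : Type*} (Δ : Set (QConstraint D)) (W W' : ℕ) : Prop :=
  ∃ d Ws, QConstraint.defining W d Ws ∈ Δ ∧ W' ∈ Ws

/-- A constraint set `Δ` is admissible iff it is satisfiable by a valuation
into `D \ {⊥}`, each variable occurring in `Δ` has exactly one constraint for
it in `Δ`, and the transitive closure of `>_Δ` is irreflexive. -/
def Admissible {D : Type*} [QualDomain D] (Δ : Set (QConstraint D)) : Prop :=
  (∃ ρ : ℕ → D, (∀ v, ρ v ≠ ⊥) ∧ ∀ c ∈ Δ, c.sat ρ) ∧
  (∀ v ∈ war Δ, ∃! c, c ∈ Δ ∧ c.cvar = v) ∧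
  Irreflexive (Relation.TransGen (dependsOn Δ))

/-- A goal `A̅ | σ | Δ`: a conjunction of atoms annotated with qualification
variables, a substitution, and a set of qualification constraints. -/
structure Goal (Sg : Signature) (D : Type*) where
  atoms : List (Atom Sg × ℕ)
  subst : Subst Sg
  cons : Set (QConstraint D)

/-- `var(A̅)`: term variables of the atoms of a goal. -/
def Goal.avars {Sg : Signature} {D : Type*} (G : Goal Sg D) : Set ℕ :=
  {v | ∃ p ∈ G.atoms, v ∈ Atom.vars p.1}

/-- `war(A̅)`: qualification variables annotating the atoms of a goal. -/
def Goal.awvars {Sg : Signature} {D : Type*} (G : Goal Sg D) : Set ℕ :=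
  {W | ∃ p ∈ G.atoms, p.2 = W}

/-- `var(G) = var(A̅) ∪ dom(σ)`. -/
def Goal.vars {Sg : Signature} {D : Type*} (G : Goal Sg D) : Set ℕ :=
  G.avars ∪ G.subst.dom

/-- `war(G) = war(A̅) ∪ dom(Δ)`. -/
def Goal.wvars {Sg : Signature} {D : Type*} (G : Goal Sg D) : Set ℕ :=
  G.awvars ∪ domC G.cons

/-- The conditions for `G ≡ A̅ | σ | Δ` to be a goal: `σ` is idempotent with
domain disjoint from `var(A̅)`; `Δ` is well-formed and admissible; every
qualification variable annotating an atom of `A̅` has exactly one threshold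
constraint in `Δ`, and `Δ` has no other threshold constraints. -/
structure IsGoal {Sg : Signature} {D : Type*} [QualDomain D]
    (G : Goal Sg D) : Prop where
  idem : G.subst.Idem
  disj : G.subst.dom ∩ G.avars = ∅
  wf : ∀ c ∈ G.cons, c.WF
  adm : Admissible G.cons
  thr : ∀ W ∈ G.awvars, ∃! c, c ∈ G.cons ∧ ∃ α β, c = QConstraint.threshold α W β
  thr_only : ∀ (α : D) (W : ℕ) (β : D),
    QConstraint.threshold α W β ∈ G.cons → W ∈ G.awvars

/-- A goal is solved iff its atom conjunction is empty and its constraint set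
is admissible and contains only defining constraints. -/
def Solved {Sg : Signature} {D : Type*} [QualDomain D] (G : Goal Sg D) : Prop :=
  G.atoms = [] ∧ Admissible G.cons ∧ ∀ c ∈ G.cons, ¬ c.isThreshold

/-- The substitution renaming variables along `π`. -/
def varRenaming {Sg : Signature} (π : ℕ → ℕ) : Subst Sg :=
  fun v => Term.var (π v)

/-- `C` is a variant of a clause of `P`: it is obtained from some clause of `P`
by an injective renaming of its variables. -/
def IsVariant {Sg : Signature} {D : Type*} (P : Set (Clause Sg D))
    (C : Clause Sg D) : Prop :=
  ∃ C₀ ∈ P, ∃ π : ℕ → ℕ, Function.Injective π ∧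
    C.head = C₀.head.applySubst (varRenaming π) ∧
    C.body = C₀.body.map (fun B => B.applySubst (varRenaming π)) ∧
    C.d = C₀.d

/-- `θ` unifies the atoms `A` and `H`. -/
def Unifies {Sg : Signature} (θ : Subst Sg) (A H : Atom Sg) : Prop :=
  A.applySubst θ = H.applySubst θ

/-- `σ₁` is a most general unifier (in Robinson's sense) of `A` and `H`. -/
def IsMGU {Sg : Signature} (σ₁ : Subst Sg) (A H : Atom Sg) : Prop :=
  Unifies σ₁ A H ∧ ∀ θ : Subst Sg, Unifies θ A H → σ₁.comp θ = θ

/-- An `SLD(D)` resolution step from `G₀` to `G₁` using the clause variant `C₁`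
and m.g.u. `σ₁`, selecting the atom at position `i` of `G₀`:
`L̅, A#W, R̅ | σ | α∘W ⊒ β, Δ ⊢ (L̅, B₁#W₁,…,Bₖ#Wₖ, R̅)σ₁ | σσ₁ | Δ₁` where
`C₁ ≡ H ←d B₁,…,Bₖ` is a fresh variant of a clause of `P` with `d ∘ α ⊒ β`,
`σ₁` is an m.g.u. of `A` and `H`, `W₁,…,Wₖ` are fresh qualification variables,
and `Δ₁ = { d∘α∘Wᵢ ⊒ β | 1 ≤ i ≤ k } ∪ { W = d ∘ ⊓{W₁,…,Wₖ} } ∪ Δ`. -/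
def StepAt {Sg : Signature} {D : Type*} [QualDomain D]
    (P : Set (Clause Sg D)) (G₀ G₁ : Goal Sg D) (C₁ : Clause Sg D)
    (σ₁ : Subst Sg) (i : ℕ) : Prop :=
  ∃ (L R : List (Atom Sg × ℕ)) (A : Atom Sg) (W : ℕ) (α β : D)
    (Δ : Set (QConstraint D)) (Ws : List ℕ),
    G₀.atoms = L ++ (A, W) :: R ∧ L.length = i ∧
    G₀.cons = insert (QConstraint.threshold α W β) Δ ∧
    QConstraint.threshold α W β ∉ Δ ∧
    IsVariant P C₁ ∧ Disjoint C₁.vars G₀.vars ∧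
    β ≤ QualDomain.att C₁.d α ∧
    IsMGU σ₁ A C₁.head ∧
    Ws.length = C₁.body.length ∧ Ws.Nodup ∧ (∀ w ∈ Ws, w ∉ G₀.wvars) ∧
    G₁.atoms = (L ++ C₁.body.zip Ws ++ R).map
      (fun p => (p.1.applySubst σ₁, p.2)) ∧
    G₁.subst = G₀.subst.comp σ₁ ∧
    G₁.cons = {c | ∃ w ∈ Ws, c = QConstraint.threshold (QualDomain.att C₁.d α) w β}
      ∪ insert (QConstraint.defining W C₁.d Ws) Δ

/-- An `SLD(D)` resolution step (selecting some atom). -/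
def Step {Sg : Signature} {D : Type*} [QualDomain D]
    (P : Set (Clause Sg D)) (G₀ G₁ : Goal Sg D) (C₁ : Clause Sg D)
    (σ₁ : Subst Sg) : Prop :=
  ∃ i, StepAt P G₀ G₁ C₁ σ₁ i

/-- Finitely many `SLD(D)` resolution steps. -/
def Steps {Sg : Signature} {D : Type*} [QualDomain D]
    (P : Set (Clause Sg D)) : Goal Sg D → Goal Sg D → Prop :=
  Relation.ReflTransGen (fun G G' => ∃ C₁ σ₁, Step P G G' C₁ σ₁)

/-- `(θ, ρ)` is a solution of the goal `G ≡ A̅ | σ | Δ`: `θ = σθ`, `ρ`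
satisfies every constraint of `Δ`, and `P ⊢_{QHL(D)} Aθ#(Wρ)` for every
annotated atom `A#W` of `A̅`. -/
def IsSolution {Sg : Signature} {D : Type*} [QualDomain D]
    (P : Set (Clause Sg D)) (G : Goal Sg D) (θ : Subst Sg) (ρ : ℕ → D) : Prop :=
  G.subst.comp θ = θ ∧
  (∀ c ∈ G.cons, c.sat ρ) ∧
  ∀ p ∈ G.atoms, Derives P (p.1.applySubst θ, ρ p.2)

/-- `μ` is the valuation `ω_Δ` determined by the defining constraints of `Δ`:
`μ W = d ∘ ⊓{μ W₁, …, μ Wₖ}` whenever `W = d ∘ ⊓{W₁,…,Wₖ} ∈ Δ`, and `μ W = ⊥`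
for every `W` outside `dom(Δ)`. -/
def IsOmega {D : Type*} [QualDomain D] (Δ : Set (QConstraint D))
    (μ : ℕ → D) : Prop :=
  (∀ W, W ∉ domC Δ → μ W = ⊥) ∧
  ∀ (W : ℕ) (d : D) (Ws : List ℕ), QConstraint.defining W d Ws ∈ Δ →
    μ W = QualDomain.att d (listInf (Ws.map μ))

/-- `(θ, ρ)` is a solution of `G` whose `QHL(D)` witnessing derivations use
exactly `n` inference steps in total. -/
def IsSolutionN {Sg : Signature} {D : Type*} [QualDomain D]
    (P : Set (Clause Sg D)) (G : Goal Sg D) (θ : Subst Sg) (ρ : ℕ → D)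
    (n : ℕ) : Prop :=
  G.subst.comp θ = θ ∧
  (∀ c ∈ G.cons, c.sat ρ) ∧
  ∃ ns : Fin G.atoms.length → ℕ,
    (∀ j, DerivesN P (ns j) ((G.atoms.get j).1.applySubst θ, ρ (G.atoms.get j).2)) ∧
    Finset.univ.sum ns = n

/-! ### Auxiliary lemmas for soundness -/

section Aux

variable {Sg : Signature} {D : Type*} [QualDomain D]

lemma Term.applySubst_comp (t : Term Sg) (σ τ : Subst Sg) :
    t.applySubst (σ.comp τ) = (t.applySubst σ).applySubst τ := by
  induction t with
  | var v => rfl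
  | app f a ih =>
    simp only [Term.applySubst]
    exact congrArg _ (funext fun i => ih i)

lemma Atom.applySubst_comp (A : Atom Sg) (σ τ : Subst Sg) :
    A.applySubst (σ.comp τ) = (A.applySubst σ).applySubst τ := by
  simp only [Atom.applySubst, Term.applySubst_comp]

lemma Term.applySubst_id (t : Term Sg) : t.applySubst Term.var = t := by
  induction t with
  | var v => rfl
  | app f a ih =>
    simp only [Term.applySubst]
    exact congrArg _ (funext fun i => ih i)

lemma Subst.comp_id (σ : Subst Sg) : σ.comp Term.var = σ :=
  funext fun v => Term.applySubst_id (σ v)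

lemma Subst.comp_assoc (σ τ υ : Subst Sg) :
    (σ.comp τ).comp υ = σ.comp (τ.comp υ) :=
  funext fun v => (Term.applySubst_comp (σ v) τ υ).symm

lemma Term.applySubst_eq_self (t : Term Sg) (σ : Subst Sg)
    (h : ∀ v ∈ t.vars, σ v = Term.var v) : t.applySubst σ = t := by
  induction t with
  | var v => exact h v rfl
  | app f a ih =>
    simp only [Term.applySubst]
    refine congrArg _ (funext fun i => ih i fun v hv => h v ?_)
    exact Set.mem_iUnion.2 ⟨i, hv⟩

lemma Atom.applySubst_eq_self (A : Atom Sg) (σ : Subst Sg)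
    (h : ∀ v ∈ A.vars, σ v = Term.var v) : A.applySubst σ = A := by
  show Atom.mk A.pred _ = A
  have : (fun i => (A.args i).applySubst σ) = A.args :=
    funext fun i => Term.applySubst_eq_self _ _ fun v hv =>
      h v (Set.mem_iUnion.2 ⟨i, hv⟩)
  rw [this]

lemma le_att_listInf {β c : D} {l : List D} (hc : β ≤ c)
    (h : ∀ x ∈ l, β ≤ QualDomain.att c x) :
    β ≤ QualDomain.att c (listInf l) := by
  induction l with
  | nil => simpa [listInf, QualDomain.att_top] using hc
  | cons a l ih =>
    have : listInf (a :: l) = a ⊓ listInf l := rfl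
    rw [this, QualDomain.att_inf]
    exact le_inf (h a List.mem_cons_self)
      (ih fun x hx => h x (List.mem_cons_of_mem a hx))

lemma inf_univ_succ {n : ℕ} (g : Fin (n + 1) → D) :
    Finset.univ.inf g = g 0 ⊓ Finset.univ.inf (g ∘ Fin.succ) := by
  rw [Fin.univ_succ, Finset.inf_cons, Finset.inf_map]
  rfl

lemma listInf_map_get (l : List ℕ) (f : ℕ → D) :
    Finset.univ.inf (fun i : Fin l.length => f (l.get i)) = listInf (l.map f) := by
  induction l with
  | nil => simp [listInf]
  | cons a l ih =>
    have : listInf ((a :: l).map f) = f a ⊓ listInf (l.map f) := rfl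
    rw [this, inf_univ_succ, ← ih]
    rfl

lemma inf_univ_cast {n m : ℕ} (h : n = m) (f : Fin m → D) :
    Finset.univ.inf (fun i : Fin n => f (Fin.cast h i)) = Finset.univ.inf f := by
  subst h; rfl

/-- Key backward induction: from any goal `G'` that reaches the solved goal
`G`, the valuation `μ = ω_Δ` satisfies all constraints of `G'`, the final
substitution factors through `G'.subst`, and all atoms of `G'` instantiated by
the remaining factor are derivable. -/
lemma sld_key (P : Set (Clause Sg D)) (G : Goal Sg D)
    (hsolved : Solved G) (μ : ℕ → D) (hμ : IsOmega G.cons μ) :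
    ∀ G' : Goal Sg D, Steps P G' G →
      (∀ α W β, QConstraint.threshold α W β ∈ G'.cons → β ≠ ⊥) →
      ∃ τ : Subst Sg, G.subst = G'.subst.comp τ ∧
        (∀ c ∈ G'.cons, c.sat μ) ∧
        ∀ p ∈ G'.atoms, Derives P (p.1.applySubst τ, μ p.2) := by
  intro G' hsteps
  induction hsteps using Relation.ReflTransGen.head_induction_on with
  | refl =>
    intro _
    refine ⟨Term.var, (Subst.comp_id _).symm, ?_, ?_⟩
    · intro c hc
      cases c with
      | threshold α W β => exact absurd trivial (hsolved.2.2 _ hc)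
      | defining W d Ws => exact hμ.2 W d Ws hc
    · intro p hp
      rw [hsolved.1] at hp
      exact absurd hp List.not_mem_nil
  | @head Gc Gn hstep hsteps ih =>
    intro hbot
    obtain ⟨C₁, σ₁, i, L, R, A, W, α, β, Δ, Ws, hatoms, hLlen, hcons, hnotin,
      hvar, hdisj, hβα, hmgu, hWslen, hnodup, hfresh, hatoms'', hsubst'', hcons''⟩ := hstep
    obtain ⟨C₀, hC₀, π, hπ, hhead, hbody, hd⟩ := hvar
    -- thresholds of G'' have nonbot β
    have hβbot : β ≠ ⊥ := hbot α W β (by rw [hcons]; exact Set.mem_insert _ _)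
    have hbot'' : ∀ α' W' β', QConstraint.threshold α' W' β' ∈ Gn.cons → β' ≠ ⊥ := by
      intro α' W' β' hmem
      rw [hcons''] at hmem
      rcases hmem with hmem | hmem
      · obtain ⟨w, hw, heq⟩ := hmem
        cases heq
        exact hβbot
      · rcases Set.mem_insert_iff.1 hmem with heq | hmem
        · exact absurd heq (by simp)
        · exact hbot α' W' β' (by rw [hcons]; exact Set.mem_insert_of_mem _ hmem)
    obtain ⟨τ', hτ', hsat'', hder''⟩ := ih hbot''
    -- basic facts
    have hdefmem : QConstraint.defining W C₁.d Ws ∈ Gn.cons := by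
      rw [hcons'']; exact Or.inr (Set.mem_insert _ _)
    have hμW : μ W = QualDomain.att C₁.d (listInf (Ws.map μ)) := hsat'' _ hdefmem
    have hthrm : ∀ w ∈ Ws, β ≤ QualDomain.att (QualDomain.att C₁.d α) (μ w) := by
      intro w hw
      exact hsat'' _ (by rw [hcons'']; exact Or.inl ⟨w, hw, rfl⟩)
    have hWnonbot : ∀ w ∈ Ws, μ w ≠ ⊥ := by
      intro w hw h0
      have := hthrm w hw
      rw [h0, QualDomain.att_bot] at this
      exact hβbot (le_bot_iff.mp this)
    have hβW : β ≤ QualDomain.att α (μ W) := by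
      rw [hμW, ← QualDomain.att_assoc]
      refine le_att_listInf (by rw [QualDomain.att_comm]; exact hβα) ?_
      intro x hx
      obtain ⟨w, hw, rfl⟩ := List.mem_map.1 hx
      have := hthrm w hw
      rwa [QualDomain.att_comm C₁.d α] at this
    have hμWbot : μ W ≠ ⊥ := by
      intro h0
      rw [h0, QualDomain.att_bot] at hβW
      exact hβbot (le_bot_iff.mp hβW)
    refine ⟨σ₁.comp τ', ?_, ?_, ?_⟩
    · rw [hτ', hsubst'', Subst.comp_assoc]
    · intro c hc
      rw [hcons] at hc
      rcases Set.mem_insert_iff.1 hc with rfl | hc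
      · exact hβW
      · exact hsat'' c (by rw [hcons'']; exact Or.inr (Set.mem_insert_of_mem _ hc))
    · -- derivability of the atoms of G'
      have hside : ∀ p ∈ G'.atoms, p ∈ L ∨ p ∈ R →
          Derives P (p.1.applySubst (σ₁.comp τ'), μ p.2) → True := fun _ _ _ _ => trivial
      have hmemside : ∀ p : Atom Sg × ℕ, (p ∈ L ∨ p ∈ R) →
          Derives P (p.1.applySubst (σ₁.comp τ'), μ p.2) := by
        intro p hp
        have hmem'' : (p.1.applySubst σ₁, p.2) ∈ Gn.atoms := by
          rw [hatoms'']
          refine List.mem_map_of_mem ?_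
          rcases hp with hp | hp
          · exact List.mem_append.2 (Or.inl (List.mem_append.2 (Or.inl hp)))
          · exact List.mem_append.2 (Or.inr hp)
        have := hder'' _ hmem''
        rwa [Atom.applySubst_comp]
      intro p hp
      rw [hatoms] at hp
      rcases List.mem_append.1 hp with hp | hp
      · exact hmemside p (Or.inl hp)
      rcases List.mem_cons.1 hp with rfl | hp
      swap
      · exact hmemside p (Or.inr hp)
      -- the selected atom
      set θ : Subst Sg := (varRenaming π : Subst Sg).comp (σ₁.comp τ') with hθ
      have hlenC : C₁.body.length = C₀.body.length := by
        rw [hbody, List.length_map]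
      have hlen2 : Ws.length = C₀.body.length := hWslen.trans hlenC
      set ds : Fin C₀.body.length → D :=
        fun j => μ (Ws.get ⟨j.val, by rw [hlen2]; exact j.isLt⟩) with hds_def
      have hds : ∀ j, ds j ≠ ⊥ := fun j =>
        hWnonbot _ (List.get_mem Ws _)
      have hbodyder : ∀ j : Fin C₀.body.length,
          Derives P ((C₀.body.get j).applySubst θ, ds j) := by
        intro j
        have hj1 : j.val < C₁.body.length := by rw [hlenC]; exact j.isLt
        have hj2 : j.val < Ws.length := by rw [hlen2]; exact j.isLt
        have hjz : j.val < (C₁.body.zip Ws).length := by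
          rw [List.length_zip]; omega
        have hzipmem : (C₁.body[j.val]'hj1, Ws[j.val]'hj2) ∈ C₁.body.zip Ws := by
          have : (C₁.body.zip Ws)[j.val]'hjz = (C₁.body[j.val]'hj1, Ws[j.val]'hj2) :=
            List.getElem_zip
          rw [← this]
          exact List.getElem_mem _
        have hmem'' : ((C₁.body[j.val]'hj1).applySubst σ₁, Ws[j.val]'hj2) ∈ Gn.atoms := by
          rw [hatoms'']
          exact List.mem_map_of_mem
            (List.mem_append.2 (Or.inl (List.mem_append.2 (Or.inr hzipmem))))
        have hder := hder'' _ hmem''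
        have hCb : C₁.body[j.val]'hj1 =
            (C₀.body[j.val]'j.isLt).applySubst (varRenaming π) := by
          simp [hbody]
        rw [hCb] at hder
        have : (C₀.body.get j).applySubst θ =
            (((C₀.body[j.val]'j.isLt).applySubst (varRenaming π)).applySubst σ₁).applySubst τ' := by
          rw [hθ, Atom.applySubst_comp, Atom.applySubst_comp]
          rfl
        rw [this]
        exact hder
      have hinf : Finset.univ.inf ds = listInf (Ws.map μ) := by
        rw [← listInf_map_get Ws μ, ← inf_univ_cast hlen2 ds]
        rfl
      have hle : μ W ≤ QualDomain.att C₀.d (Finset.univ.inf ds) := by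
        rw [hinf, ← hd, hμW]
      have hheadeq : A.applySubst (σ₁.comp τ') = C₀.head.applySubst θ := by
        rw [hθ, Atom.applySubst_comp, Atom.applySubst_comp (σ := varRenaming π),
          ← hhead, Atom.applySubst_comp, hmgu.1]
      show Derives P (A.applySubst (σ₁.comp τ'), μ W)
      rw [hheadeq]
      exact Derives.qmp C₀ hC₀ θ ds hds hbodyder (μ W) hμWbot hle

end Aux

/-- Soundness of `SLD(D)` resolution: if `G₀ ⊢* G` is a finite `SLD(D)`
resolution computation from a goal `G₀` ending in a solved goal `G ≡ σ | Δ`,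
and `μ = ω_Δ` is the valuation determined by the defining constraints of `Δ`,
then the computed answer `(σ, μ)` is a solution of `G₀`. -/
theorem sld_soundness {Sg : Signature} {D : Type*} [QualDomain D]
    (P : Set (Clause Sg D)) (hP : ∀ C ∈ P, C.d ≠ ⊥)
    (G₀ G : Goal Sg D) (hG₀ : IsGoal G₀)
    (hsteps : Steps P G₀ G) (hsolved : Solved G)
    (μ : ℕ → D) (hμ : IsOmega G.cons μ) :
    IsSolution P G₀ G.subst μ := by
  have hbot : ∀ α W β, QConstraint.threshold α W β ∈ G₀.cons → β ≠ ⊥ := by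
    intro α W β h
    exact (hG₀.wf _ h).2.1
  obtain ⟨τ, hτ, hsat, hder⟩ := sld_key P G hsolved μ hμ G₀ hsteps hbot
  refine ⟨?_, hsat, ?_⟩
  · rw [hτ, ← Subst.comp_assoc, hG₀.idem]
  · intro p hp
    have hfix : p.1.applySubst G₀.subst = p.1 := by
      refine Atom.applySubst_eq_self _ _ fun v hv => ?_
      by_contra hne
      have : v ∈ G₀.subst.dom ∩ G₀.avars := ⟨hne, ⟨p, hp, hv⟩⟩
      rw [hG₀.disj] at this
      exact this
    rw [hτ, Atom.applySubst_comp, hfix]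
    exact hder p hp
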